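/- Let λ ∈ P⁺, a_j ∈ C, and let g_j ⊂ sl2-hat be the sl2-triple spanned by e_j, f_j, h_j (j = 0 or 1). Then the monic polynomial p_j(t) = ∏_{k=0}^{λ(h_j)} (t − λ(h_j) + 2k + a_j) of degree λ(h_j)+1 satisfies p_j(B_j − a_j)·v_λ = 0 for the highest weight vector v_λ ∈ V(λ), where B_j = i(e_j − f_j). Moreover p_j(0) = 0 if and only if a_j ∈ Z and λ(h_j) − |a_j| ∈ 2N_0. -/

import Mathlib

structure AffineSl2 (L : Type*) [LieRing L] [LieAlgebra ℂ L] where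
  E : ℤ → L
  F : ℤ → L
  H : ℤ → L
  c : L
  d : L
  lie_EF : ∀ m n : ℤ, ⁅E m, F n⁆ = H (m + n) + (if m = -n then (m : ℂ) else 0) • c
  lie_HE : ∀ m n : ℤ, ⁅H m, E n⁆ = (2 : ℂ) • E (m + n)
  lie_HF : ∀ m n : ℤ, ⁅H m, F n⁆ = (-2 : ℂ) • F (m + n)
  lie_EE : ∀ m n : ℤ, ⁅E m, E n⁆ = 0
  lie_FF : ∀ m n : ℤ, ⁅F m, F n⁆ = 0
  lie_HH : ∀ m n : ℤ, ⁅H m, H n⁆ = (if m = -n then (2 * m : ℂ) else 0) • c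
  lie_dE : ∀ n : ℤ, ⁅d, E n⁆ = (n : ℂ) • E n
  lie_dF : ∀ n : ℤ, ⁅d, F n⁆ = (n : ℂ) • F n
  lie_dH : ∀ n : ℤ, ⁅d, H n⁆ = (n : ℂ) • H n
  lie_cx : ∀ x : L, ⁅c, x⁆ = 0


open Finset Polynomial Complex

noncomputable def annihilC (N m k : ℕ) : ℂ :=
  (-Complex.I)^m * Complex.I^k * (m.choose k) * ∏ t ∈ Finset.Ico k m, ((N:ℂ) - t)

lemma annihilC_eq_zero (N m k : ℕ) (h : m < k) : annihilC N m k = 0 := by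
  simp [annihilC, Nat.choose_eq_zero_of_lt h]

lemma negI_mul_I_pow (n : ℕ) : (-Complex.I)^n * Complex.I^n = 1 := by
  rw [← mul_pow, neg_mul, Complex.I_mul_I, neg_neg, one_pow]

lemma annihil_helper (N m k : ℕ) :
    (m.choose (k+1) : ℂ) * (((N:ℂ) - k) * ∏ t ∈ Finset.Ico (k+1) m, ((N:ℂ) - t))
      = (m.choose (k+1) : ℂ) * ∏ t ∈ Finset.Ico k m, ((N:ℂ) - t) := by
  rcases lt_or_ge k m with h | h
  · rw [Finset.prod_eq_prod_Ico_succ_bot h]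
  · rw [Nat.choose_eq_zero_of_lt (by omega)]
    simp

lemma annihilC_rec (N m k : ℕ) :
    annihilC N m (k+1) * ((↑(k+1):ℂ) * ((N:ℂ) - (↑(k+1):ℂ) + 1))
      + (if k = 0 then 0 else annihilC N m (k-1))
      - annihilC N m k * (Complex.I * ((N:ℂ) - 2*k))
      = annihilC N (m+1) k := by
  have hI : Complex.I * Complex.I = -1 := Complex.I_mul_I
  rcases k with _ | j
  · simp only [if_pos rfl, annihilC, zero_add, Nat.choose_one_right, Nat.choose_zero_right]
    have hA := annihil_helper N m 0
    rw [Finset.prod_Ico_succ_top (Nat.zero_le m)]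
    simp only [zero_add, Nat.choose_one_right] at hA
    push_cast at hA ⊢
    linear_combination ((-Complex.I)^m * Complex.I) * hA
  · rw [if_neg (by omega)]
    simp only [Nat.add_sub_cancel]
    rcases le_or_gt (j+1) m with h | h
    · -- main case
      have hA := annihil_helper N m (j+1)
      have hpj : (∏ t ∈ Finset.Ico j m, ((N:ℂ) - t))
          = ((N:ℂ) - j) * ∏ t ∈ Finset.Ico (j+1) m, ((N:ℂ) - t) :=
        Finset.prod_eq_prod_Ico_succ_bot (by omega) _
      have hpt : (∏ t ∈ Finset.Ico (j+1) (m+1), ((N:ℂ) - t))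
          = (∏ t ∈ Finset.Ico (j+1) m, ((N:ℂ) - t)) * ((N:ℂ) - m) :=
        Finset.prod_Ico_succ_top h _
      have h1 : ((m.choose (j+1+1)):ℂ) * (↑j+2) = (m.choose (j+1)) * ((m:ℂ) - ↑j - 1) := by
        have h0 := congrArg (Nat.cast : ℕ → ℂ) (Nat.choose_succ_right_eq m (j+1))
        push_cast [Nat.cast_sub h] at h0
        linear_combination h0
      have h2 : (((m+1).choose (j+1)):ℂ) = (m.choose j) + (m.choose (j+1)) := by
        exact_mod_cast congrArg (Nat.cast : ℕ → ℂ) (Nat.choose_succ_succ m j)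
      have h3 : ((m.choose (j+1)):ℂ) * (↑m+1) = ((m+1).choose (j+1)) * ((m:ℂ) - ↑j) := by
        have h0 := congrArg (Nat.cast : ℕ → ℂ) (Nat.choose_mul_succ_eq m (j+1))
        push_cast [Nat.cast_sub (by omega : j ≤ m)] at h0
        linear_combination h0
      simp only [annihilC]
      rw [hpj, hpt]
      push_cast at hA h1 h2 h3 ⊢
      set Q := ∏ t ∈ Finset.Ico (j+1) m, ((N:ℂ) - t) with hQ
      set w := (-Complex.I)^m * Complex.I^j * Q with hw
      linear_combination ((-Complex.I)^m * Complex.I^j * Complex.I * Complex.I * ((j:ℂ)+2)) * hA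
        + (-w) * h1 + (-w*((N:ℂ)-(j:ℂ))) * h2 + (-w) * h3
        + (w*(((j:ℂ)+2)*(m.choose (j+1+1):ℂ) - ((N:ℂ)-2*(j:ℂ)-2)*(m.choose (j+1):ℂ)
             + ((m+1).choose (j+1):ℂ)*((N:ℂ)-(m:ℂ)))) * hI
    · rcases eq_or_lt_of_le (by omega : m + 1 ≤ j + 1) with he | he
      · -- j = m
        have hjm : j = m := by omega
        subst hjm
        rw [annihilC_eq_zero N j (j+1+1) (by omega), annihilC_eq_zero N j (j+1) (by omega)]
        simp only [annihilC, Nat.choose_self, Finset.Ico_self, Finset.prod_empty, Nat.cast_one]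
        have k1 := negI_mul_I_pow j
        have k2 := negI_mul_I_pow (j+1)
        linear_combination k1 - k2
      · -- j > m
        rw [annihilC_eq_zero N m (j+1+1) (by omega), annihilC_eq_zero N m (j+1) (by omega),
          annihilC_eq_zero N m j (by omega), annihilC_eq_zero N (m+1) (j+1) (by omega)]
        ring


section OpLemmas
variable {M : Type*} [AddCommGroup M] [Module ℂ M]
  (E F H : Module.End ℂ M) (N : ℕ) (v : M)
  (hEF : E * F = F * E + H)
  (hHE : H * E = E * H + (2:ℂ) • E)
  (hHF : H * F = F * H - (2:ℂ) • F)
  (hEv : E v = 0) (hHv : H v = (N:ℂ) • v)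

include hHF hHv in
lemma lemH : ∀ k : ℕ, H ((F^k) v) = ((N:ℂ) - 2*k) • (F^k) v := by
  intro k
  induction k with
  | zero => simpa using hHv
  | succ k ih =>
    have e : (F^(k+1)) v = F ((F^k) v) := by rw [pow_succ', Module.End.mul_apply]
    rw [e]
    have e2 : H (F ((F^k) v)) = F (H ((F^k) v)) - (2:ℂ) • F ((F^k) v) := by
      have := congrArg (fun T : Module.End ℂ M => T ((F^k) v)) hHF
      simpa [Module.End.mul_apply, LinearMap.sub_apply, LinearMap.smul_apply] using this
    rw [e2, ih, map_smul]
    match_scalars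
    push_cast
    ring

include hEF hHF hEv hHv in
lemma lemE : ∀ k : ℕ, E ((F^k) v) = ((k:ℂ) * ((N:ℂ) - k + 1)) • (F^(k-1)) v := by
  intro k
  induction k with
  | zero => simpa using hEv
  | succ k ih =>
    have e : (F^(k+1)) v = F ((F^k) v) := by rw [pow_succ', Module.End.mul_apply]
    rw [e]
    have e2 : E (F ((F^k) v)) = F (E ((F^k) v)) + H ((F^k) v) := by
      have := congrArg (fun T : Module.End ℂ M => T ((F^k) v)) hEF
      simpa [Module.End.mul_apply, LinearMap.add_apply] using this
    rw [e2, ih, lemH F H N v hHF hHv, map_smul]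
    simp only [Nat.add_sub_cancel]
    rcases Nat.eq_zero_or_pos k with rfl | hk
    · match_scalars <;> push_cast <;> ring
    · have e3 : F ((F^(k-1)) v) = (F^k) v := by
        conv_rhs => rw [show k = (k-1)+1 by omega]
        rw [pow_succ', Module.End.mul_apply]
      rw [e3]
      match_scalars
      push_cast
      ring
end OpLemmas

open Finset Polynomial Complex

section OpLemmas2
variable {M : Type*} [AddCommGroup M] [Module ℂ M]
  (E F H : Module.End ℂ M) (N : ℕ) (v : M)
  (hEF : E * F = F * E + H)
  (hHE : H * E = E * H + (2:ℂ) • E)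
  (hHF : H * F = F * H - (2:ℂ) • F)
  (hEv : E v = 0) (hHv : H v = (N:ℂ) • v)

include hEF hHF hEv hHv in
lemma lemG : ∀ k : ℕ, (E + F - Complex.I • H) ((F^k) v)
    = ((k:ℂ) * ((N:ℂ) - k + 1)) • (F^(k-1)) v + (F^(k+1)) v
      - (Complex.I * ((N:ℂ) - 2*k)) • (F^k) v := by
  intro k
  have e0 : (E + F - Complex.I • H) ((F^k) v)
      = E ((F^k) v) + F ((F^k) v) - Complex.I • H ((F^k) v) := by
    simp [LinearMap.add_apply, LinearMap.sub_apply, LinearMap.smul_apply]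
  rw [e0, lemE E F H N v hEF hHF hEv hHv, lemH F H N v hHF hHv,
    show F ((F^k) v) = (F^(k+1)) v by rw [pow_succ', Module.End.mul_apply],
    smul_smul]

include hEF hHF hEv hHv in
lemma lemKey : ∀ m : ℕ, ((E + F - Complex.I • H)^m) v
    = ∑ k ∈ Finset.range (m+1), annihilC N m k • (F^k) v := by
  intro m
  induction m with
  | zero => simp [annihilC]
  | succ m ih =>
    set G := E + F - Complex.I • H with hG
    have e0 : (G^(m+1)) v = G ((G^m) v) := by rw [pow_succ', Module.End.mul_apply]
    rw [e0, ih, map_sum]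
    simp only [map_smul, hG, lemG E F H N v hEF hHF hEv hHv, smul_add, smul_sub, smul_smul]
    rw [Finset.sum_sub_distrib, Finset.sum_add_distrib]
    -- now : S1 + S2 - S3 = target
    have hS1 : (∑ k ∈ Finset.range (m+1),
          (annihilC N m k * ((k:ℂ) * ((N:ℂ) - k + 1))) • (F^(k-1)) v)
        = ∑ k ∈ Finset.range (m+2),
          (annihilC N m (k+1) * ((↑(k+1):ℂ) * ((N:ℂ) - (↑(k+1):ℂ) + 1))) • (F^k) v := by
      rw [Finset.sum_range_succ' (fun k => (annihilC N m k * ((k:ℂ) * ((N:ℂ) - k + 1))) • (F^(k-1)) v) m]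
      rw [Finset.sum_range_succ (fun k => (annihilC N m (k+1) * ((↑(k+1):ℂ) * ((N:ℂ) - (↑(k+1):ℂ) + 1))) • (F^k) v) (m+1)]
      rw [Finset.sum_range_succ (fun k => (annihilC N m (k+1) * ((↑(k+1):ℂ) * ((N:ℂ) - (↑(k+1):ℂ) + 1))) • (F^k) v) m]
      rw [annihilC_eq_zero N m (m+1+1) (by omega), annihilC_eq_zero N m (m+1) (by omega)]
      simp [Nat.add_sub_cancel]
    have hS2 : (∑ k ∈ Finset.range (m+1), annihilC N m k • (F^(k+1)) v)
        = ∑ k ∈ Finset.range (m+2),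
          (if k = 0 then 0 else annihilC N m (k-1)) • (F^k) v := by
      rw [Finset.sum_range_succ' (fun k => (if k = 0 then (0:ℂ) else annihilC N m (k-1)) • (F^k) v) (m+1)]
      simp [Nat.add_sub_cancel]
    have hS3 : (∑ k ∈ Finset.range (m+1),
          (annihilC N m k * (Complex.I * ((N:ℂ) - 2*k))) • (F^k) v)
        = ∑ k ∈ Finset.range (m+2),
          (annihilC N m k * (Complex.I * ((N:ℂ) - 2*k))) • (F^k) v := by
      rw [Finset.sum_range_succ (fun k => (annihilC N m k * (Complex.I * ((N:ℂ) - 2*k))) • (F^k) v) (m+1)]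
      rw [annihilC_eq_zero N m (m+1) (by omega)]
      simp
    rw [hS1, hS2, hS3, ← Finset.sum_add_distrib, ← Finset.sum_sub_distrib]
    exact Finset.sum_congr rfl fun k _ => by
      rw [← add_smul, ← sub_smul, annihilC_rec]
end OpLemmas2

open Finset Polynomial Complex

lemma annihilC_top (N k : ℕ) (h : k ≤ N) : annihilC N (N+1) k = 0 := by
  unfold annihilC
  rw [Finset.prod_eq_zero (Finset.mem_Ico.mpr ⟨h, by omega⟩) (by simp : ((N:ℂ) - (N:ℕ)) = 0)]
  simp

section OpLemmas3
variable {M : Type*} [AddCommGroup M] [Module ℂ M]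
  (E F H : Module.End ℂ M) (N : ℕ) (v : M)
  (hEF : E * F = F * E + H)
  (hHE : H * E = E * H + (2:ℂ) • E)
  (hHF : H * F = F * H - (2:ℂ) • F)
  (hEv : E v = 0) (hHv : H v = (N:ℂ) • v) (hFv : (F^(N+1)) v = 0)

include hEF hHF hEv hHv hFv in
lemma lemVanish : ((E + F - Complex.I • H)^(N+1)) v = 0 := by
  rw [lemKey E F H N v hEF hHF hEv hHv (N+1)]
  apply Finset.sum_eq_zero
  intro k hk
  rcases eq_or_lt_of_le (Finset.mem_range_succ_iff.mp hk) with h | h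
  · rw [h, hFv, smul_zero]
  · rw [annihilC_top N k (by omega), zero_smul]

include hEF hHE hHF in
lemma lemBG : (Complex.I • (E - F)) * (E + F - Complex.I • H)
    = (E + F - Complex.I • H) * (Complex.I • (E - F))
      - (2:ℂ) • (E + F - Complex.I • H) := by
  simp only [smul_mul_assoc, mul_smul_comm, mul_sub, sub_mul, mul_add, add_mul,
    smul_sub, smul_add, smul_smul]
  rw [hEF, hHE, hHF]
  match_scalars <;> simp [Complex.I_mul_I] <;> ring

end OpLemmas3

lemma commPow {M : Type*} [AddCommGroup M] [Module ℂ M] (B G : Module.End ℂ M)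
    (hbg : B * G = G * B - (2:ℂ) • G) :
    ∀ m : ℕ, B * G^m = G^m * B - (2*(m:ℂ)) • G^m := by
  intro m
  induction m with
  | zero => simp
  | succ m ih =>
    calc B * G^(m+1) = (B * G^m) * G := by rw [pow_succ, mul_assoc]
    _ = (G^m * B - (2*(m:ℂ)) • G^m) * G := by rw [ih]
    _ = G^m * (B * G) - (2*(m:ℂ)) • (G^m * G) := by
        rw [sub_mul, smul_mul_assoc, mul_assoc]
    _ = G^m * (G * B - (2:ℂ) • G) - (2*(m:ℂ)) • (G^m * G) := by rw [hbg]
    _ = G^(m+1) * B - (2*((m+1:ℕ):ℂ)) • G^(m+1) := by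
        rw [mul_sub, ← mul_assoc, ← pow_succ, mul_smul_comm, ← pow_succ]
        match_scalars <;> (push_cast; ring)

open Finset Polynomial Complex

lemma lemCore {M : Type*} [AddCommGroup M] [Module ℂ M]
    (E F H : Module.End ℂ M) (N : ℕ) (v : M) (a : ℂ)
    (hEF : E * F = F * E + H)
    (hHE : H * E = E * H + (2:ℂ) • E)
    (hHF : H * F = F * H - (2:ℂ) • F)
    (hEv : E v = 0) (hHv : H v = (N:ℂ) • v) (hFv : (F^(N+1)) v = 0) :
    (Polynomial.aeval (Complex.I • (E - F) - a • (1 : Module.End ℂ M))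
      (∏ k ∈ Finset.range (N+1),
        (Polynomial.X - Polynomial.C ((N:ℂ) - 2*k - a)))) v = 0 := by
  set B := Complex.I • (E - F) with hB
  set G := E + F - Complex.I • H with hG
  set T := B - a • (1 : Module.End ℂ M) with hT
  have hbgm := commPow B G (lemBG E F H hEF hHE hHF)
  have hBv : B v = (-Complex.I) • F v := by
    rw [hB, LinearMap.smul_apply, LinearMap.sub_apply, hEv, zero_sub, smul_neg, neg_smul]
  have hGv : G v = F v - (Complex.I * (N:ℂ)) • v := by
    rw [hG, LinearMap.sub_apply, LinearMap.add_apply, LinearMap.smul_apply, hEv, hHv,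
      zero_add, smul_smul]
  have hvan : (G^(N+1)) v = 0 := lemVanish E F H N v hEF hHF hEv hHv hFv
  have hfact : ∀ c : ℂ, Polynomial.aeval T (Polynomial.X - Polynomial.C c)
      = B - (c + a) • (1 : Module.End ℂ M) := by
    intro c
    rw [map_sub, Polynomial.aeval_X, Polynomial.aeval_C,
      Module.algebraMap_end_eq_smul_id, hT, ← Module.End.one_eq_id]
    module
  clear_value B G T
  have hmain : ∀ m : ℕ, (Polynomial.aeval T (∏ k ∈ Finset.range m,
      (Polynomial.X - Polynomial.C ((N:ℂ) - 2*k - a)))) v = (-Complex.I)^m • (G^m) v := by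
    intro m
    induction m with
    | zero => simp
    | succ m ih =>
      rw [Finset.prod_range_succ, map_mul]
      have hcomm : (Polynomial.aeval T) (∏ k ∈ Finset.range m,
            (Polynomial.X - Polynomial.C ((N:ℂ) - 2*k - a)))
            * (Polynomial.aeval T) (Polynomial.X - Polynomial.C ((N:ℂ) - 2*(m:ℕ) - a))
          = (Polynomial.aeval T) (Polynomial.X - Polynomial.C ((N:ℂ) - 2*(m:ℕ) - a))
            * (Polynomial.aeval T) (∏ k ∈ Finset.range m,
            (Polynomial.X - Polynomial.C ((N:ℂ) - 2*k - a))) := by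
        rw [← map_mul, mul_comm, map_mul]
      rw [hcomm, Module.End.mul_apply, ih, hfact]
      have hc : ((N:ℂ) - 2*(m:ℕ) - a) + a = (N:ℂ) - 2*(m:ℕ) := by ring
      rw [hc, map_smul]
      have happ : (B - ((N:ℂ) - 2*(m:ℕ)) • (1:Module.End ℂ M)) ((G^m) v)
          = (-Complex.I) • ((G^(m+1)) v) := by
        have h1 : B ((G^m) v) = (G^m) (B v) - (2*(m:ℂ)) • (G^m) v := by
          have := congrArg (fun S : Module.End ℂ M => S v) (hbgm m)
          simpa [Module.End.mul_apply, LinearMap.sub_apply, LinearMap.smul_apply] using this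
        have h2 : (G^(m+1)) v = (G^m) (G v) := by rw [pow_succ, Module.End.mul_apply]
        have h3 : B v - (N:ℂ) • v = (-Complex.I) • (G v) := by
          rw [hBv, hGv, smul_sub, smul_smul]
          have e4 : -Complex.I * (Complex.I * (N:ℂ)) = (N:ℂ) := by
            rw [← mul_assoc, neg_mul, Complex.I_mul_I, neg_neg, one_mul]
          rw [e4]
        calc (B - ((N:ℂ) - 2*(m:ℕ)) • (1:Module.End ℂ M)) ((G^m) v)
            = B ((G^m) v) - ((N:ℂ) - 2*(m:ℕ)) • ((G^m) v) := by
              simp [LinearMap.sub_apply, LinearMap.smul_apply]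
        _ = (G^m) (B v) - (N:ℂ) • ((G^m) v) := by rw [h1]; module
        _ = (G^m) (B v - (N:ℂ) • v) := by rw [map_sub, map_smul]
        _ = (-Complex.I) • ((G^(m+1)) v) := by rw [h3, map_smul, h2]
      rw [happ, smul_smul, ← pow_succ]
  rw [hmain (N+1), hvan, smul_zero]


attribute [local instance 100] LieRing.ofAssociativeRing

/-- Let `V(λ)` be an integrable highest weight module (given by an action `ρ` of
`sl2`-hat on `M` and a highest weight vector `v` with `e_j v = 0`, `h_j v = λ(h_j)v`,
`f_j^{λ(h_j)+1} v = 0`).  Then the monic polynomial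
`p_j(t) = ∏_{k=0}^{λ(h_j)} (t − λ(h_j) + 2k + a_j)` of degree `λ(h_j)+1` satisfies
`p_j(B_j − a_j)·v = 0`, where `B_j = i(e_j − f_j)`.  Moreover `p_j(0) = 0` iff
`a_j ∈ ℤ` and `λ(h_j) − |a_j| ∈ 2ℕ₀`.  (Here `j : Fin 2`, with
`e₀ = F 1, f₀ = E (−1), h₀ = c − H 0` and `e₁ = E 0, f₁ = F 0, h₁ = H 0`.) -/
theorem annihilating_polynomial {L M : Type*} [LieRing L] [LieAlgebra ℂ L]
    [AddCommGroup M] [Module ℂ M]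
    (𝔄 : AffineSl2 L) (ρ : L →ₗ⁅ℂ⁆ Module.End ℂ M)
    (j : Fin 2) (ej fj hj : L)
    (hej : ej = if j = 0 then 𝔄.F 1 else 𝔄.E 0)
    (hfj : fj = if j = 0 then 𝔄.E (-1) else 𝔄.F 0)
    (hhj : hj = if j = 0 then 𝔄.c - 𝔄.H 0 else 𝔄.H 0)
    (N : ℕ)                 -- `N = λ(h_j)`
    (a : ℂ) (v : M)
    (hhw : ρ ej v = 0)
    (hwt : ρ hj v = (N : ℂ) • v)
    (hint : ((ρ fj) ^ (N + 1)) v = 0)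
    (p : Polynomial ℂ)
    (hp : p = ∏ k ∈ Finset.range (N + 1),
      (Polynomial.X - Polynomial.C ((N : ℂ) - 2 * k - a))) :
    (Polynomial.aeval (ρ (Complex.I • (ej - fj)) - a • (1 : Module.End ℂ M)) p) v = 0
      ∧ (p.eval 0 = 0 ↔ ∃ z : ℤ, a = (z : ℂ) ∧ ∃ m : ℕ, (N : ℤ) = |z| + 2 * m) := by
  constructor
  · -- the annihilation statement
    have hbr : ⁅ej, fj⁆ = hj ∧ ⁅hj, ej⁆ = (2:ℂ) • ej ∧ ⁅hj, fj⁆ = (-2:ℂ) • fj := by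
      rcases (show j = 0 ∨ j = 1 from by fin_cases j <;> simp) with rfl | rfl
      · rw [if_pos rfl] at hej hfj hhj
        subst hej hfj hhj
        refine ⟨?_, ?_, ?_⟩
        · rw [← lie_skew, 𝔄.lie_EF]
          norm_num
          module
        · rw [sub_lie, 𝔄.lie_cx, 𝔄.lie_HF]
          norm_num
          try module
        · rw [sub_lie, 𝔄.lie_cx, 𝔄.lie_HE]
          norm_num
          try module
      · rw [if_neg (by decide)] at hej hfj hhj
        subst hej hfj hhj
        refine ⟨?_, ?_, ?_⟩
        · rw [𝔄.lie_EF]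
          norm_num
        · rw [𝔄.lie_HE]
          norm_num
        · rw [𝔄.lie_HF]
          norm_num
    obtain ⟨hb1, hb2, hb3⟩ := hbr
    have hEF : ρ ej * ρ fj = ρ fj * ρ ej + ρ hj := by
      have h := ρ.map_lie ej fj
      rw [hb1, Ring.lie_def] at h
      rw [h]
      abel
    have hHE : ρ hj * ρ ej = ρ ej * ρ hj + (2:ℂ) • ρ ej := by
      have h := ρ.map_lie hj ej
      rw [hb2, Ring.lie_def, map_smul] at h
      rw [eq_add_of_sub_eq h.symm]
      module
    have hHF : ρ hj * ρ fj = ρ fj * ρ hj - (2:ℂ) • ρ fj := by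
      have h := ρ.map_lie hj fj
      rw [hb3, Ring.lie_def, map_smul] at h
      rw [eq_add_of_sub_eq h.symm]
      module
    have hop : ρ (Complex.I • (ej - fj)) - a • (1 : Module.End ℂ M)
        = Complex.I • (ρ ej - ρ fj) - a • (1 : Module.End ℂ M) := by
      rw [map_smul, map_sub]
    rw [hop, hp]
    exact lemCore (ρ ej) (ρ fj) (ρ hj) N v a hEF hHE hHF hhw hwt hint
  · -- the evaluation statement
    have h20 : (p.eval 0 = 0) ↔ ∃ k ∈ Finset.range (N+1), a = (N:ℂ) - 2*(k:ℕ) := by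
      rw [hp, Polynomial.eval_prod, Finset.prod_eq_zero_iff]
      constructor
      · rintro ⟨k, hk, h⟩
        simp only [Polynomial.eval_sub, Polynomial.eval_X, Polynomial.eval_C] at h
        exact ⟨k, hk, by linear_combination h⟩
      · rintro ⟨k, hk, h⟩
        refine ⟨k, hk, ?_⟩
        simp only [Polynomial.eval_sub, Polynomial.eval_X, Polynomial.eval_C]
        linear_combination h
    rw [h20]
    constructor
    · rintro ⟨k, hk, hak⟩
      have hkN : k ≤ N := Finset.mem_range_succ_iff.mp hk
      refine ⟨(N:ℤ) - 2*k, by push_cast; exact hak, ?_⟩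
      rcases le_or_gt (2*k) N with h | h
      · refine ⟨k, ?_⟩
        rw [abs_of_nonneg (by omega : (0:ℤ) ≤ (N:ℤ) - 2*k)]
        ring
      · refine ⟨N - k, ?_⟩
        rw [abs_of_neg (by omega : ((N:ℤ) - 2*k) < 0)]
        push_cast [Nat.cast_sub hkN]
        ring
    · rintro ⟨z, haz, m, hm⟩
      rcases le_or_gt 0 z with hz | hz
      · rw [abs_of_nonneg hz] at hm
        refine ⟨m, Finset.mem_range_succ_iff.mpr (by omega), ?_⟩
        have h2 : (z:ℂ) = (N:ℂ) - 2*(m:ℂ) := by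
          exact_mod_cast congrArg (fun t : ℤ => (t:ℂ)) (show z = (N:ℤ) - 2*m by omega)
        rw [haz, h2]
        try push_cast
        try ring
      · rw [abs_of_neg hz] at hm
        obtain ⟨n, hn⟩ : ∃ n : ℕ, (n:ℤ) = -z := ⟨z.natAbs, by omega⟩
        refine ⟨m + n, Finset.mem_range_succ_iff.mpr (by omega), ?_⟩
        have h2 : (z:ℂ) = (N:ℂ) - 2*(m:ℂ) - 2*(n:ℂ) := by
          exact_mod_cast congrArg (fun t : ℤ => (t:ℂ)) (show z = (N:ℤ) - 2*m - 2*n by omega)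
        rw [haz, h2]
        push_cast
        ring
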